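/- arXiv:2106.12363 — 2 statements merged into one kernel-verified Lean document; each statement's English description precedes it below -/
import Mathlib

section
/- A vector v in R^n over a PID R is primitive (its span is a direct summand of R^n) if and only if the greatest common divisor of its coordinates is a unit. -/
/-- over a PID, a nonzero vector `v : Fin n → R` is primitive (its span is a
direct summand of `R^n`) iff the gcd of its coordinates is a unit. -/
theorem stmt7 (R : Type*) [CommRing R] [IsDomain R] [IsPrincipalIdealRing R] [NormalizedGCDMonoid R]
    (n : ℕ) (v : Fin n → R) (hv : v ≠ 0) :
    (∃ W : Submodule R (Fin n → R), IsCompl (Submodule.span R {v}) W) ↔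
      IsUnit (Finset.univ.gcd v) := by
  classical
  set d := Finset.univ.gcd v with hd
  constructor
  · rintro ⟨W, h⟩
    set p := Submodule.span R {v} with hp
    have hvp : v ∈ p := Submodule.mem_span_singleton_self v
    -- projection onto p
    set π : (Fin n → R) →ₗ[R] (Fin n → R) :=
      p.subtype.comp (Submodule.projectionOnto p W h) with hπ
    have hπv : π v = v := by
      have := Submodule.projectionOnto_apply_left h ⟨v, hvp⟩
      simp [hπ, this]
    -- write v = d • w
    have hdvd : ∀ i, d ∣ v i := fun i => Finset.gcd_dvd (Finset.mem_univ i)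
    choose w hw using hdvd
    have hd0 : d ≠ 0 := by
      intro h0
      apply hv
      funext i
      have := hw i
      rw [h0, zero_mul] at this
      simpa using this
    have hveq : v = d • w := by funext i; simpa using hw i
    have hπw : π w = w := by
      have h1 : d • π w = d • w := by
        rw [← map_smul, ← hveq, hπv, hveq]
      funext i
      have := congrFun h1 i
      simp only [Pi.smul_apply, smul_eq_mul] at this
      exact mul_left_cancel₀ hd0 this
    have hwp : w ∈ p := by
      rw [← hπw]
      exact (Submodule.projectionOnto p W h w).2
    obtain ⟨c, hc⟩ := Submodule.mem_span_singleton.1 hwp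
    -- v = (d*c) • v
    have hvv : v = (d * c) • v := by
      conv_lhs => rw [hveq, ← hc]
      funext i
      simp [mul_comm, mul_assoc, mul_left_comm]
    obtain ⟨i, hi⟩ := Function.ne_iff.1 hv
    have : v i = (d * c) * v i := by
      have := congrFun hvv i
      simpa using this
    have hdc : d * c = 1 := by
      have h2 : (d * c - 1) * v i = 0 := by linear_combination -this
      rcases mul_eq_zero.1 h2 with h3 | h3
      · exact sub_eq_zero.1 h3
      · exact absurd h3 (by simpa using hi)
    exact IsUnit.of_mul_eq_one c hdc
  · intro hu
    -- 1 is a combination of the v i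
    set I := Ideal.span (Set.range v) with hI
    have hdI : d ∈ I := by
      obtain ⟨g, hg⟩ := (IsPrincipalIdealRing.principal I)
      have hgdvd : ∀ i, g ∣ v i := by
        intro i
        have : v i ∈ I := Ideal.subset_span ⟨i, rfl⟩
        rw [hg] at this
        exact (Ideal.mem_span_singleton).1 this
      have : g ∣ d := Finset.dvd_gcd fun i _ => hgdvd i
      rw [hg]
      exact Ideal.mem_span_singleton.2 this
    have h1 : (1 : R) ∈ I := by
      have := Ideal.eq_top_of_isUnit_mem I hdI hu
      rw [this]; trivial
    rw [hI] at h1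
    obtain ⟨c, hc⟩ := (Finsupp.mem_span_range_iff_exists_finsupp).1 h1
    -- define functional f x = ∑ c i * x i
    let f : (Fin n → R) →ₗ[R] R :=
      { toFun := fun x => c.sum fun i a => a * x i
        map_add' := by
          intro x y
          simp [Finsupp.sum, mul_add, Finset.sum_add_distrib]
        map_smul' := by
          intro r x
          simp [Finsupp.sum, Finset.mul_sum, mul_comm, mul_assoc, mul_left_comm] }
    have hfv : f v = 1 := by
      simpa [f, Finsupp.sum, smul_eq_mul] using hc
    refine ⟨LinearMap.ker f, ?_, ?_⟩
    · rw [Submodule.disjoint_def]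
      intro x hx hk
      obtain ⟨a, rfl⟩ := Submodule.mem_span_singleton.1 hx
      have : f (a • v) = 0 := hk
      rw [map_smul, hfv, smul_eq_mul, mul_one] at this
      rw [this, zero_smul]
    · rw [codisjoint_iff, eq_top_iff]
      intro x _
      have hx : x = f x • v + (x - f x • v) := by ring_nf
      rw [hx]
      refine Submodule.add_mem_sup ?_ ?_
      · exact Submodule.smul_mem _ _ (Submodule.mem_span_singleton_self v)
      · simp [LinearMap.mem_ker, map_sub, map_smul, hfv]
end

section
/- Let R be a PID, let P be a finitely generated free R-module, and let V, W, C be direct summands of P with V ∩ W = 0, V + W a proper direct summand of P, W ⊕ C = P, and V ⊆ C. Then the assignment (A,B) ↦ (A, B ∩ C) defines an order-isomorphism from the poset of splittings (A,B) of P with A ⊆ V and W ⊆ B onto the poset of splittings (A',B') of C with A' ⊆ V, with inverse (A',B') ↦ (A', B' ⊕ W). Here a splitting of P is a pair of nonzero proper direct summands (A,B) with A ⊕ B = P, ordered by (A,B) ≤ (A',B') iff A is a summand of A' and B' is a summand of B. -/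
section

variable {R P : Type*} [CommRing R] [IsDomain R] [IsPrincipalIdealRing R]
  [AddCommGroup P] [Module R P]

/-- `A` is a direct summand of the submodule `A'`. -/
def IsSummandIn (A A' : Submodule R P) : Prop :=
  A ≤ A' ∧ ∃ C : Submodule R P, C ≤ A' ∧ A ⊓ C = ⊥ ∧ A ⊔ C = A'

private lemma aux_sup_inf {W C B : Submodule R P} (hWC : W ⊔ C = ⊤) (hWB : W ≤ B) :
    W ⊔ (B ⊓ C) = B := by
  have h := sup_inf_assoc_of_le (x := W) (z := B) C hWB
  rw [hWC, top_inf_eq] at h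
  rw [inf_comm]
  exact h.symm

private lemma aux_sub_proj_mem {W C : Submodule R P} (h : IsCompl C W) (x : P) :
    x - (C.subtype ∘ₗ Submodule.linearProjOfIsCompl C W h) x ∈ W := by
  have h1 := Submodule.projection_add_projection_eq_self h x
  have hx : x - (C.subtype ∘ₗ Submodule.linearProjOfIsCompl C W h) x
      = (W.linearProjOfIsCompl C h.symm x : P) := sub_eq_iff_eq_add'.mpr h1.symm
  rw [hx]; exact (W.linearProjOfIsCompl C h.symm x).2

private lemma aux_map_proj {W C : Submodule R P} (h : IsCompl C W)
    {B : Submodule R P} (hWB : W ≤ B) :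
    Submodule.map (C.subtype ∘ₗ Submodule.linearProjOfIsCompl C W h) B = B ⊓ C := by
  set π := C.subtype ∘ₗ Submodule.linearProjOfIsCompl C W h with hπ
  apply le_antisymm
  · rintro x ⟨b, hb, rfl⟩
    refine ⟨?_, (Submodule.linearProjOfIsCompl C W h b).2⟩
    have : π b = b - (b - π b) := by abel
    rw [this]
    exact B.sub_mem hb (hWB (aux_sub_proj_mem h b))
  · rintro x ⟨hxB, hxC⟩
    refine ⟨x, hxB, ?_⟩
    show C.subtype (Submodule.projectionOnto C W h x) = x
    rw [show x = ((⟨x, hxC⟩ : C) : P) from rfl,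
      Submodule.projectionOnto_apply_left h]
    rfl

private lemma aux_summand_iff {W C B B₁ : Submodule R P} (h : IsCompl C W)
    (hWB : W ≤ B) (hWB₁ : W ≤ B₁) :
    IsSummandIn B₁ B ↔ IsSummandIn (B₁ ⊓ C) (B ⊓ C) := by
  set π := C.subtype ∘ₗ Submodule.linearProjOfIsCompl C W h with hπ
  constructor
  · rintro ⟨hle, D, hDle, hdisj, hsup⟩
    refine ⟨inf_le_inf_right C hle, Submodule.map π D, ?_, ?_, ?_⟩
    · calc Submodule.map π D ≤ Submodule.map π B := Submodule.map_mono hDle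
        _ = B ⊓ C := aux_map_proj h hWB
    · rw [eq_bot_iff]
      rintro x ⟨⟨hxB₁, hxC⟩, d, hd, rfl⟩
      have hdmem : d ∈ B₁ := by
        have : d = π d + (d - π d) := by abel
        rw [this]
        exact B₁.add_mem hxB₁ (hWB₁ (aux_sub_proj_mem h d))
      have hmem : d ∈ B₁ ⊓ D := ⟨hdmem, hd⟩
      have hd0 : d = 0 := by rwa [hdisj, Submodule.mem_bot] at hmem
      simp [hd0]
    · have := congrArg (Submodule.map π) hsup
      rwa [Submodule.map_sup, aux_map_proj h hWB₁, aux_map_proj h hWB] at this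
  · rintro ⟨hle, E, hEle, hdisj, hsup⟩
    have hB₁ : W ⊔ (B₁ ⊓ C) = B₁ := aux_sup_inf h.symm.sup_eq_top hWB₁
    have hB : W ⊔ (B ⊓ C) = B := aux_sup_inf h.symm.sup_eq_top hWB
    refine ⟨?_, E, le_trans hEle inf_le_left, ?_, ?_⟩
    · rw [← hB₁, ← hB]; exact sup_le_sup_left hle W
    · rw [eq_bot_iff]
      rintro x ⟨hxB₁, hxE⟩
      have hxC : x ∈ C := (hEle hxE).2
      have : x ∈ (B₁ ⊓ C) ⊓ E := ⟨⟨hxB₁, hxC⟩, hxE⟩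
      rwa [hdisj] at this
    · rw [← hB₁, sup_assoc, hsup, hB]


/-- A splitting of `P`: a pair of nonzero proper direct summands `(A, B)` with `A ⊕ B = P`. -/
def IsSplitting (A B : Submodule R P) : Prop :=
  A ≠ ⊥ ∧ B ≠ ⊥ ∧ A ≠ ⊤ ∧ B ≠ ⊤ ∧ A ⊓ B = ⊥ ∧ A ⊔ B = ⊤

/-- A splitting of the submodule `C`: a pair of nonzero summands, proper in `C`,
with `A ⊕ B = C`. -/
def IsSplittingOf (C A B : Submodule R P) : Prop :=
  A ≠ ⊥ ∧ B ≠ ⊥ ∧ A ≠ C ∧ B ≠ C ∧ A ≤ C ∧ B ≤ C ∧ A ⊓ B = ⊥ ∧ A ⊔ B = C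

/-- The partial order on splittings: `(A,B) ≤ (A',B')` iff `A` is a summand of `A'` and
`B'` is a summand of `B`. -/
def SplitLE (A B A' B' : Submodule R P) : Prop :=
  IsSummandIn A A' ∧ IsSummandIn B' B

/-- cutting down, Lemma 4.8 of the paper: for `V, W, C` summands of a f.g. free
module `P` over a PID with `V ⊓ W = ⊥`, `V ⊔ W` a proper summand of `P`, `W ⊕ C = P` and
`V ≤ C`, the assignment `(A,B) ↦ (A, B ⊓ C)` is an order-isomorphism from the poset of
splittings `(A,B)` of `P` with `A ≤ V` and `W ≤ B` onto the poset of splittings `(A',B')` of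
`C` with `A' ≤ V`, with inverse `(A',B') ↦ (A', B' ⊔ W)`. -/
theorem stmt9 [Module.Finite R P] [Module.Free R P]
    (V W C : Submodule R P)
    (hV : ∃ V', IsCompl V V') (hW : ∃ W', IsCompl W W') (hC : ∃ C', IsCompl C C')
    (hVW : V ⊓ W = ⊥)
    (hproper : (∃ D, IsCompl (V ⊔ W) D) ∧ V ⊔ W ≠ ⊤)
    (hWC : W ⊓ C = ⊥ ∧ W ⊔ C = ⊤) (hVC : V ≤ C) :
    -- well-definedness of `(A,B) ↦ (A, B ⊓ C)`
    (∀ A B : Submodule R P, IsSplitting A B → A ≤ V → W ≤ B →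
      IsSplittingOf C A (B ⊓ C) ∧ A ≤ V) ∧
    -- well-definedness of the inverse `(A',B') ↦ (A', B' ⊔ W)`
    (∀ A' B' : Submodule R P, IsSplittingOf C A' B' → A' ≤ V →
      IsSplitting A' (B' ⊔ W) ∧ A' ≤ V ∧ W ≤ B' ⊔ W) ∧
    -- the two maps are mutually inverse
    (∀ A B : Submodule R P, IsSplitting A B → A ≤ V → W ≤ B → (B ⊓ C) ⊔ W = B) ∧
    (∀ A' B' : Submodule R P, IsSplittingOf C A' B' → A' ≤ V → (B' ⊔ W) ⊓ C = B') ∧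
    -- the forward map is an order-embedding (preserves and reflects the order)
    (∀ A B A₁ B₁ : Submodule R P,
      IsSplitting A B → A ≤ V → W ≤ B → IsSplitting A₁ B₁ → A₁ ≤ V → W ≤ B₁ →
      (SplitLE A B A₁ B₁ ↔ SplitLE A (B ⊓ C) A₁ (B₁ ⊓ C))) := by
  obtain ⟨hWCd, hWCc⟩ := hWC
  have hcompl : IsCompl C W :=
    ⟨disjoint_iff.2 (by rw [inf_comm]; exact hWCd),
     codisjoint_iff.2 (by rw [sup_comm]; exact hWCc)⟩
  -- the second round-trip identity, used in several places
  have hround2 : ∀ B' : Submodule R P, B' ≤ C → (B' ⊔ W) ⊓ C = B' := by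
    intro B' hBle
    have h := sup_inf_assoc_of_le (x := B') (z := C) W hBle
    rw [hWCd, sup_bot_eq] at h
    exact h
  refine ⟨?_, ?_, ?_, ?_, ?_⟩
  · -- forward well-definedness
    rintro A B ⟨hA0, hB0, hAt, hBt, hAB, hABt⟩ hAV hWB
    have hB : W ⊔ (B ⊓ C) = B := aux_sup_inf hWCc hWB
    have hBC0 : B ⊓ C ≠ ⊥ := by
      intro hbc
      apply hproper.2
      have hBW : B = W := by rw [← hB, hbc, sup_bot_eq]
      rw [eq_top_iff, ← hABt]
      exact sup_le_sup hAV (le_of_eq hBW)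
    refine ⟨⟨hA0, hBC0, ?_, ?_, le_trans hAV hVC, inf_le_right, ?_, ?_⟩, hAV⟩
    · rintro rfl
      apply hBC0
      rw [inf_comm]
      exact hAB
    · intro hEq
      apply hBt
      rw [eq_top_iff, ← hWCc]
      exact sup_le hWB (hEq ▸ inf_le_left)
    · rw [eq_bot_iff, ← hAB]
      exact le_inf inf_le_left (le_trans inf_le_right inf_le_left)
    · have h := sup_inf_assoc_of_le (x := A) (z := C) B (le_trans hAV hVC)
      rw [hABt, top_inf_eq] at h
      exact h.symm
  · -- backward well-definedness
    rintro A' B' ⟨hA0, hB0, hAC, hBC, hAle, hBle, hAB, hABC⟩ hAV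
    have hrt := hround2 B' hBle
    refine ⟨⟨hA0, ?_, ?_, ?_, ?_, ?_⟩, hAV, le_sup_right⟩
    · intro h0
      exact hB0 (le_bot_iff.1 (h0 ▸ (le_sup_left : B' ≤ B' ⊔ W)))
    · intro ht
      apply hproper.2
      rw [eq_top_iff]
      exact le_trans (le_trans (le_of_eq ht.symm) hAV) le_sup_left
    · intro ht
      apply hBC
      rw [← hrt, ht, top_inf_eq]
    · rw [eq_bot_iff, ← hAB]
      intro x hx
      exact ⟨hx.1, hrt ▸ ⟨hx.2, hAle hx.1⟩⟩
    · rw [← sup_assoc, hABC, sup_comm]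
      exact hWCc
  · -- first round trip
    rintro A B ⟨hA0, hB0, hAt, hBt, hAB, hABt⟩ hAV hWB
    rw [sup_comm]
    exact aux_sup_inf hWCc hWB
  · -- second round trip
    rintro A' B' ⟨hA0, hB0, hAC, hBC, hAle, hBle, hAB, hABC⟩ hAV
    exact hround2 B' hBle
  · -- order embedding
    rintro A B A₁ B₁ hS hAV hWB hS₁ hAV₁ hWB₁
    exact and_congr Iff.rfl (aux_summand_iff hcompl hWB hWB₁)


end
end
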